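/- Let τ > 0, T > 0, and δ > 0. Consider f(g) = g·τ/(1 + g·T·e^{gδ}) on (0,∞). There exists a unique g* > 0 satisfying (g*)²·T·δ·e^{g*δ} = 1, and f is strictly increasing on (0, g*) and strictly decreasing on (g*, ∞); in particular, f attains its maximum over (0,∞) uniquely at g*. -/

import Mathlib

open Real Set

theorem csma_spectral_efficiency_unimodal
    (τ T δ : ℝ) (hτ : τ > 0) (hT : T > 0) (hδ : δ > 0) :
    ∃ gstar : ℝ, 0 < gstar ∧
      gstar ^ 2 * T * δ * Real.exp (gstar * δ) = 1 ∧
      (∀ g : ℝ, 0 < g → g ^ 2 * T * δ * Real.exp (g * δ) = 1 → g = gstar) ∧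
      StrictMonoOn (fun g : ℝ => g * τ / (1 + g * T * Real.exp (g * δ)))
        (Set.Ioo (0:ℝ) gstar) ∧
      StrictAntiOn (fun g : ℝ => g * τ / (1 + g * T * Real.exp (g * δ)))
        (Set.Ioi gstar) ∧
      (∀ g : ℝ, 0 < g → g ≠ gstar →
        g * τ / (1 + g * T * Real.exp (g * δ))
          < gstar * τ / (1 + gstar * T * Real.exp (gstar * δ))) := by
  set f : ℝ → ℝ := fun g => g * τ / (1 + g * T * Real.exp (g * δ)) with hfdef
  set h : ℝ → ℝ := fun g => g ^ 2 * T * δ * Real.exp (g * δ) with hhdef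
  -- h is strictly monotone on [0, ∞)
  have hmono : StrictMonoOn h (Ici 0) := by
    intro a ha b hb hab
    simp only [hhdef]
    have hb0 : (0:ℝ) < b := lt_of_le_of_lt ha hab
    have he : Real.exp (a*δ) < Real.exp (b*δ) := by
      apply Real.exp_lt_exp.mpr; nlinarith
    have hea : (0:ℝ) < Real.exp (a*δ) := Real.exp_pos _
    have ha0 : (0:ℝ) ≤ a := ha
    have hsq : a^2 < b^2 := by nlinarith
    have hstep : a^2 * Real.exp (a*δ) < b^2 * Real.exp (b*δ) := by
      calc a^2 * Real.exp (a*δ) ≤ a^2 * Real.exp (b*δ) := by nlinarith [sq_nonneg a]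
      _ < b^2 * Real.exp (b*δ) := by nlinarith [Real.exp_pos (b*δ)]
    nlinarith [mul_pos hT hδ, hstep]
  have hcont : Continuous h := by fun_prop
  -- existence of gstar via IVT
  have h0 : h 0 = 0 := by simp [hhdef]
  set g0 : ℝ := 1 + 1/(T*δ) with hg0def
  have hg0pos : (0:ℝ) < g0 := by positivity
  have hg0 : 1 ≤ h g0 := by
    have hTδ : 0 < T*δ := mul_pos hT hδ
    have he : (1:ℝ) ≤ Real.exp (g0*δ) := by
      rw [Real.one_le_exp_iff]; positivity
    have hfrac : (0:ℝ) < 1/(T*δ) := by positivity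
    have hgt1 : g0 > 1/(T*δ) := by rw [hg0def]; linarith
    have hge1 : (1:ℝ) ≤ g0 := by rw [hg0def]; linarith
    have h1 : g0 * (T*δ) > 1 := by
      calc (1:ℝ) = (1/(T*δ)) * (T*δ) := by field_simp
      _ < g0 * (T*δ) := by exact mul_lt_mul_of_pos_right hgt1 hTδ
    have h2 : g0^2 * T * δ ≥ g0 * (T*δ) := by nlinarith [mul_pos hTδ hg0pos]
    calc (1:ℝ) ≤ g0^2 * T * δ := by linarith
    _ ≤ g0^2 * T * δ * Real.exp (g0*δ) := by nlinarith
  obtain ⟨gstar, hgmem, hgeq⟩ : ∃ g ∈ Icc (0:ℝ) g0, h g = 1 := by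
    have := intermediate_value_Icc (le_of_lt hg0pos) hcont.continuousOn
    have h1 : (1:ℝ) ∈ Icc (h 0) (h g0) := by rw [h0]; exact ⟨zero_le_one, hg0⟩
    exact this h1
  have hgpos : 0 < gstar := by
    rcases eq_or_lt_of_le hgmem.1 with rfl | hp
    · rw [h0] at hgeq; norm_num at hgeq
    · exact hp
  -- h < 1 on (0,gstar), h > 1 on (gstar, ∞)
  have hlt : ∀ x, 0 < x → x < gstar → h x < 1 := by
    intro x hx hxg
    rw [← hgeq]
    exact hmono (le_of_lt hx) (le_of_lt hgpos) hxg
  have hgt : ∀ x, gstar < x → 1 < h x := by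
    intro x hxg
    rw [← hgeq]
    exact hmono (le_of_lt hgpos) (le_of_lt (hgpos.trans hxg)) hxg
  -- derivative of f
  have hDpos : ∀ x : ℝ, 0 ≤ x → 0 < 1 + x * T * Real.exp (x*δ) := by
    intro x hx
    have he := Real.exp_pos (x*δ)
    nlinarith [mul_nonneg (mul_nonneg hx hT.le) he.le]
  have hderiv : ∀ x : ℝ, 0 < x →
      HasDerivAt f (τ * (1 - h x) / (1 + x * T * Real.exp (x*δ))^2) x := by
    intro x hx
    have hexp : HasDerivAt (fun g : ℝ => Real.exp (g*δ)) (Real.exp (x*δ) * δ) x := by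
      have : HasDerivAt (fun g : ℝ => g*δ) δ x := by
        simpa using (hasDerivAt_id x).mul_const δ
      simpa using this.exp
    have hden : HasDerivAt (fun g : ℝ => 1 + g * T * Real.exp (g*δ))
        (T * Real.exp (x*δ) + (x*T) * (Real.exp (x*δ) * δ)) x := by
      have h1 : HasDerivAt (fun g : ℝ => g * T) T x := by
        simpa using (hasDerivAt_id x).mul_const T
      have := h1.mul hexp
      exact this.const_add (1:ℝ)
    have hnum : HasDerivAt (fun g : ℝ => g * τ) τ x := by
      simpa using (hasDerivAt_id x).mul_const τ
    have hne : 1 + x * T * Real.exp (x*δ) ≠ 0 := ne_of_gt (hDpos x (le_of_lt hx))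
    have := hnum.div hden hne
    refine this.congr_deriv ?_
    simp only [hhdef]
    field_simp
    ring
  -- strict mono on Ioc 0 gstar
  have hfc : ∀ x : ℝ, 0 < x → ContinuousAt f x := by
    intro x hx
    apply ContinuousAt.div
    · fun_prop
    · fun_prop
    · exact ne_of_gt (hDpos x (le_of_lt hx))
  have hSM : StrictMonoOn f (Ioc 0 gstar) := by
    apply strictMonoOn_of_deriv_pos (convex_Ioc 0 gstar)
    · exact fun x hx => (hfc x hx.1).continuousWithinAt
    · intro x hx
      rw [interior_Ioc] at hx
      rw [(hderiv x hx.1).deriv]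
      have h1 : h x < 1 := hlt x hx.1 hx.2
      have h2 := hDpos x (le_of_lt hx.1)
      apply div_pos
      · nlinarith
      · positivity
  have hSA : StrictAntiOn f (Ici gstar) := by
    apply strictAntiOn_of_deriv_neg (convex_Ici gstar)
    · exact fun x hx => (hfc x (lt_of_lt_of_le hgpos hx)).continuousWithinAt
    · intro x hx
      rw [interior_Ici] at hx
      rw [(hderiv x (hgpos.trans hx)).deriv]
      have h1 : 1 < h x := hgt x hx
      have h2 := hDpos x (le_of_lt (hgpos.trans hx))
      apply div_neg_of_neg_of_pos
      · nlinarith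
      · positivity
  refine ⟨gstar, hgpos, hgeq, ?_, ?_, ?_, ?_⟩
  · intro g hg hg1
    by_contra hne
    rcases lt_or_gt_of_ne hne with hl | hr
    · have := hlt g hg hl
      simp only [hhdef] at this
      rw [hg1] at this; exact lt_irrefl 1 this
    · have := hgt g hr
      simp only [hhdef] at this
      rw [hg1] at this; exact lt_irrefl 1 this
  · exact hSM.mono (Ioo_subset_Ioc_self)
  · exact hSA.mono (Ioi_subset_Ici_self)
  · intro g hg hne
    rcases lt_or_gt_of_ne hne with hl | hr
    · exact hSM ⟨hg, le_of_lt hl⟩ ⟨hgpos, le_refl _⟩ hl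
    · exact hSA (mem_Ici.mpr (le_refl _)) (le_of_lt hr) hr
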